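/- Let v > 0 and Δ > 0, let W be a Gaussian random variable with mean 0 and variance v, and define the two-bit quantizer g(w) = sign(w)·(1/√10) if |w| < Δ and g(w) = sign(w)·(3/√10) if |w| ≥ Δ. Then E[g(W)·W] = (2/√10)·√(v/(2π))·(1 + 2·e^{−Δ²/(2v)}). If in addition the threshold satisfies P(|W| ≥ Δ) = 1/2 (so that E[g(W)²] = 1/2), then (E[g(W)·W])² / (E[W²]·E[g(W)²]) = (2/(5π))·(1 + 2·e^{−Δ²/(2v)})². -/

import Mathlib

open MeasureTheory ProbabilityTheory

section Aux
open Real Filter Set intervalIntegral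
open scoped NNReal ENNReal



lemma tendsto_mul_exp_zero {b : ℝ} (hb : 0 < b) :
    Tendsto (fun x : ℝ => x * Real.exp (-b * x ^ 2)) atTop (nhds 0) := by
  have h := rpow_mul_exp_neg_mul_sq_isLittleO_exp_neg hb 1
  simp only [Real.rpow_one] at h
  have hexp : Tendsto (fun x : ℝ => Real.exp (-(1/2) * x)) atTop (nhds 0) := by
    have : Tendsto (fun x : ℝ => -(1/2) * x) atTop atBot :=
      (tendsto_const_mul_atBot_of_neg (by norm_num)).mpr tendsto_id
    exact Real.tendsto_exp_atBot.comp this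
  exact h.isBigO.trans_tendsto hexp

lemma hasDeriv_key {b : ℝ} (hb : 0 < b) (x : ℝ) :
    HasDerivAt (fun x : ℝ => -(2*b)⁻¹ * Real.exp (-b * x ^ 2))
      (x * Real.exp (-b * x ^ 2)) x := by
  have := (((hasDerivAt_pow 2 x).const_mul (-b)).exp).const_mul (-(2*b)⁻¹)
  refine this.congr_deriv ?_
  field_simp
  ring

lemma intB {b : ℝ} (hb : 0 < b) (a : ℝ) :
    ∫ x in Set.Ioi a, x * Real.exp (-b * x ^ 2) = Real.exp (-b * a ^ 2) / (2*b) := by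
  have hbase : Tendsto (fun x : ℝ => Real.exp (-b * x ^ 2)) atTop (nhds 0) := by
    refine Real.tendsto_exp_atBot.comp ?_
    exact (tendsto_pow_atTop two_ne_zero).const_mul_atTop_of_neg (neg_lt_zero.2 hb)
  have htop : Tendsto (fun x : ℝ => -(2*b)⁻¹ * Real.exp (-b * x ^ 2)) atTop (nhds 0) := by
    have := hbase.const_mul (-(2*b)⁻¹)
    rwa [mul_zero] at this
  have h := integral_Ioi_of_hasDerivAt_of_tendsto'
    (fun x _ => hasDeriv_key hb x)
    ((integrable_mul_exp_neg_mul_sq hb).integrableOn (s := Set.Ioi a)) htop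
  rw [h]
  field_simp
  ring

lemma integrable_sq_exp {b : ℝ} (hb : 0 < b) :
    Integrable (fun x : ℝ => x ^ 2 * Real.exp (-b * x ^ 2)) := by
  have := integrable_rpow_mul_exp_neg_mul_sq hb (s := 2) (by norm_num)
  simpa [Real.rpow_two] using this

lemma intA {b : ℝ} (hb : 0 < b) :
    ∫ x : ℝ, x ^ 2 * Real.exp (-b * x ^ 2) = Real.sqrt (π / b) / (2*b) := by
  have hu : ∀ x : ℝ, HasDerivAt (fun x : ℝ => x) 1 x := fun x => hasDerivAt_id x
  have hb2 : (0:ℝ) < 2 * b := by linarith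
  have heq : (fun x : ℝ => x) * (fun x => x * Real.exp (-b * x ^ 2))
      = fun x : ℝ => x ^ 2 * Real.exp (-b * x ^ 2) := by
    funext x; simp [Pi.mul_apply]; ring
  have huv' : Integrable ((fun x : ℝ => x) * fun x => x * Real.exp (-b * x ^ 2)) := by
    rw [heq]; exact integrable_sq_exp hb
  have hu'v : Integrable ((fun _ : ℝ => (1:ℝ)) * fun x => -(2*b)⁻¹ * Real.exp (-b * x ^ 2)) := by
    have h1 := (integrable_exp_neg_mul_sq hb).const_mul (-(2*b)⁻¹)
    refine h1.congr ?_
    filter_upwards with x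
    simp [Pi.mul_apply]
  have htop : Tendsto ((fun x : ℝ => x) * fun x => -(2*b)⁻¹ * Real.exp (-b * x ^ 2))
      atTop (nhds 0) := by
    have := (tendsto_mul_exp_zero hb).const_mul (-(2*b)⁻¹)
    rw [mul_zero] at this
    refine this.congr fun x => ?_
    simp [Pi.mul_apply]; ring
  have hbot : Tendsto ((fun x : ℝ => x) * fun x => -(2*b)⁻¹ * Real.exp (-b * x ^ 2))
      atBot (nhds 0) := by
    have := ((tendsto_mul_exp_zero hb).const_mul (-(2*b)⁻¹)).comp tendsto_neg_atBot_atTop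
    rw [mul_zero] at this
    have := this.neg
    rw [neg_zero] at this
    refine this.congr fun x => ?_
    simp [Function.comp, Pi.mul_apply]; ring
  have h := MeasureTheory.integral_mul_deriv_eq_deriv_mul (fun x _ => hu x) (fun x _ => hasDeriv_key hb x)
    huv' hu'v hbot htop
  have h2 : ∫ x : ℝ, (1:ℝ) * (-(2*b)⁻¹ * Real.exp (-b * x ^ 2)) = -(2*b)⁻¹ * Real.sqrt (π / b) := by
    simp only [one_mul]
    rw [MeasureTheory.integral_const_mul, integral_gaussian]
  calc ∫ x : ℝ, x ^ 2 * Real.exp (-b * x ^ 2)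
      = ∫ x : ℝ, x * (x * Real.exp (-b * x ^ 2)) := by congr 1; funext x; ring
    _ = 0 - 0 - ∫ x : ℝ, (1:ℝ) * (-(2*b)⁻¹ * Real.exp (-b * x ^ 2)) := h
    _ = Real.sqrt (π / b) / (2*b) := by
        rw [h2]
        field_simp
        ring


lemma integral_gauss (v : ℝ≥0) (hv : v ≠ 0) (f : ℝ → ℝ) :
    ∫ x, f x ∂(gaussianReal 0 v) = ∫ x, gaussianPDFReal 0 v x * f x := by
  rw [gaussianReal_of_var_ne_zero _ hv, gaussianPDF_def]
  have h : (fun x => ENNReal.ofReal (gaussianPDFReal 0 v x))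
      = fun x => ((Real.toNNReal (gaussianPDFReal 0 v x) : ℝ≥0) : ENNReal) := rfl
  rw [h, integral_withDensity_eq_integral_smul
    ((measurable_gaussianPDFReal 0 v).real_toNNReal)]
  congr 1
  funext x
  rw [NNReal.smul_def, Real.coe_toNNReal _ (gaussianPDFReal_nonneg 0 v x), smul_eq_mul]

lemma even_int {f : ℝ → ℝ} (hf : ∀ x, f (-x) = f x) (hint : Integrable f) :
    ∫ x, f x = 2 * ∫ x in Set.Ioi (0:ℝ), f x := by
  rw [← integral_Iic_add_Ioi (hint.integrableOn) (hint.integrableOn)]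
  have h : ∫ x in Set.Iic (0:ℝ), f x = ∫ x in Set.Ioi (0:ℝ), f x := by
    rw [← neg_zero (G := ℝ), ← integral_comp_neg_Ioi]
    simp only [hf, neg_zero]
  rw [h]; ring

end Aux

/-- Bussgang gain of the two-bit quantizer with output levels
`±1/√10, ±3/√10` and threshold `Δ`, applied to `W ∼ N(0, v)`:
`E[g(W)·W] = (2/√10)·√(v/(2π))·(1 + 2e^{−Δ²/(2v)})`, and if moreover
`P(|W| ≥ Δ) = 1/2` (so that `E[g(W)²] = 1/2`), then
`(E[g(W)·W])²/(E[W²]·E[g(W)²]) = (2/(5π))·(1 + 2e^{−Δ²/(2v)})²`. -/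
theorem stmt_11 (v : NNReal) (hv : 0 < v) (Δ : ℝ) (hΔ : 0 < Δ) :
    let g : ℝ → ℝ := fun w =>
      if |w| < Δ then Real.sign w * (1 / Real.sqrt 10)
      else Real.sign w * (3 / Real.sqrt 10)
    let μ : Measure ℝ := gaussianReal 0 v
    (∫ w, g w * w ∂μ) =
        (2 / Real.sqrt 10) * Real.sqrt (v / (2 * Real.pi)) *
          (1 + 2 * Real.exp (-Δ ^ 2 / (2 * v))) ∧
      ((μ {w | Δ ≤ |w|}).toReal = 1 / 2 →
        (∫ w, g w * w ∂μ) ^ 2 / ((∫ w, w ^ 2 ∂μ) * ∫ w, g w ^ 2 ∂μ) =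
          (2 / (5 * Real.pi)) * (1 + 2 * Real.exp (-Δ ^ 2 / (2 * v))) ^ 2) := by
  have hπ := Real.pi_pos
  intro g μ
  have hg : ∀ w, g w = if |w| < Δ then Real.sign w * (1 / Real.sqrt 10)
      else Real.sign w * (3 / Real.sqrt 10) := fun w => rfl
  have hμ : μ = gaussianReal 0 v := rfl
  have hvne : v ≠ 0 := hv.ne'
  set vr : ℝ := (v : ℝ) with hvr_def
  have hvr : 0 < vr := by exact_mod_cast hv
  set b : ℝ := (2 * vr)⁻¹ with hb_def
  have hb : 0 < b := by rw [hb_def]; positivity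
  set c : ℝ := (Real.sqrt (2 * Real.pi * vr))⁻¹ with hc_def
  have h2pv : (0:ℝ) < 2 * Real.pi * vr := by positivity
  have hspos : 0 < Real.sqrt (2 * Real.pi * vr) := Real.sqrt_pos.mpr h2pv
  have hsq : Real.sqrt (2 * Real.pi * vr) ^ 2 = 2 * Real.pi * vr := Real.sq_sqrt h2pv.le
  have hcpos : 0 < c := by rw [hc_def]; positivity
  have hs10 : (0:ℝ) < Real.sqrt 10 := Real.sqrt_pos.mpr (by norm_num)
  have hpdf : ∀ x : ℝ, gaussianPDFReal 0 v x = c * Real.exp (-b * x ^ 2) := by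
    intro x
    rw [gaussianPDFReal, hc_def]
    congr 2
    rw [hb_def]
    field_simp
    simp [hvr_def]
  have hexpΔ : -b * Δ ^ 2 = -Δ ^ 2 / (2 * vr) := by rw [hb_def]; field_simp
  -- sign is measurable
  have hsgn : Measurable Real.sign := by
    have hdef : Real.sign = fun r : ℝ => if r < 0 then (-1:ℝ) else if 0 < r then 1 else 0 :=
      funext fun r => rfl
    rw [hdef]
    exact Measurable.ite (measurableSet_lt measurable_id measurable_const) measurable_const
      (Measurable.ite (measurableSet_lt measurable_const measurable_id) measurable_const
        measurable_const)
  have hgm : Measurable g := by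
    have : g = fun w => if |w| < Δ then Real.sign w * (1 / Real.sqrt 10)
        else Real.sign w * (3 / Real.sqrt 10) := funext hg
    rw [this]
    exact Measurable.ite (measurableSet_lt measurable_abs measurable_const)
      (hsgn.mul_const _) (hsgn.mul_const _)
  have hgb : ∀ w, |g w| ≤ 3 / Real.sqrt 10 := by
    intro w
    have hs : |Real.sign w| ≤ 1 := by
      rcases lt_trichotomy w 0 with h | h | h
      · simp [Real.sign_of_neg h]
      · simp [h, Real.sign_zero]
      · simp [Real.sign_of_pos h]
    rw [hg]
    split_ifs
    · rw [abs_mul]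
      calc |Real.sign w| * |1 / Real.sqrt 10| ≤ 1 * (1 / Real.sqrt 10) := by
            rw [abs_of_pos (by positivity : (0:ℝ) < 1 / Real.sqrt 10)]
            exact mul_le_mul_of_nonneg_right hs (by positivity)
        _ ≤ 3 / Real.sqrt 10 := by rw [one_mul]; gcongr <;> norm_num
    · rw [abs_mul]
      calc |Real.sign w| * |3 / Real.sqrt 10| ≤ 1 * (3 / Real.sqrt 10) := by
            rw [abs_of_pos (by positivity : (0:ℝ) < 3 / Real.sqrt 10)]
            exact mul_le_mul_of_nonneg_right hs (by positivity)
        _ = 3 / Real.sqrt 10 := one_mul _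
  -- integrability of the main integrand
  have hint : Integrable (fun x => c * Real.exp (-b * x ^ 2) * (g x * x)) := by
    have hmeas : AEStronglyMeasurable (fun x => c * Real.exp (-b * x ^ 2) * (g x * x)) volume := by
      refine Measurable.aestronglyMeasurable ?_
      exact ((Real.measurable_exp.comp ((measurable_id.pow_const 2).const_mul (-b))).const_mul
        c).mul (hgm.mul measurable_id)
    refine Integrable.mono' (((integrable_mul_exp_neg_mul_sq hb).norm.const_mul
      (c * (3 / Real.sqrt 10)))) hmeas (Filter.Eventually.of_forall fun x => ?_)
    have h1 : ‖c * Real.exp (-b * x ^ 2) * (g x * x)‖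
        = c * Real.exp (-b * x ^ 2) * (|g x| * |x|) := by
      rw [Real.norm_eq_abs, abs_mul, abs_mul, abs_mul, abs_of_pos hcpos,
        abs_of_pos (Real.exp_pos _)]
    rw [h1]
    calc c * Real.exp (-b * x ^ 2) * (|g x| * |x|)
        ≤ c * Real.exp (-b * x ^ 2) * (3 / Real.sqrt 10 * |x|) := by
          have := hgb x
          gcongr
      _ = c * (3 / Real.sqrt 10) * ‖x * Real.exp (-b * x ^ 2)‖ := by
          rw [Real.norm_eq_abs, abs_mul, abs_of_pos (Real.exp_pos _)]
          ring
  -- evenness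
  have heven : ∀ x, c * Real.exp (-b * (-x) ^ 2) * (g (-x) * (-x))
      = c * Real.exp (-b * x ^ 2) * (g x * x) := by
    intro x
    rw [hg, hg, abs_neg, Real.sign_neg, neg_sq]
    split_ifs <;> ring
  -- split the one-sided integral
  have hsplit : ∫ x in Set.Ioi (0:ℝ), c * Real.exp (-b * x ^ 2) * (g x * x)
      = c / Real.sqrt 10 * (∫ x in Set.Ioi (0:ℝ), x * Real.exp (-b * x ^ 2)) +
        2 * c / Real.sqrt 10 * (∫ x in Set.Ioi Δ, x * Real.exp (-b * x ^ 2)) := by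
    have h0 : ∀ᵐ x : ℝ, x ≠ Δ := by
      rw [MeasureTheory.ae_iff]
      have : {x : ℝ | ¬x ≠ Δ} = {Δ} := by ext x; simp
      rw [this]
      exact measure_singleton Δ
    have hae : ∀ᵐ x ∂(volume.restrict (Set.Ioi (0:ℝ))),
        c * Real.exp (-b * x ^ 2) * (g x * x)
          = c / Real.sqrt 10 * (x * Real.exp (-b * x ^ 2)) +
            2 * c / Real.sqrt 10 *
              Set.indicator (Set.Ioi Δ) (fun y => y * Real.exp (-b * y ^ 2)) x := by
      refine (ae_restrict_of_ae h0).mp ((ae_restrict_mem measurableSet_Ioi).mono ?_)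
      intro x hx hne
      have hxpos : (0:ℝ) < x := hx
      rw [hg]
      rcases lt_or_gt_of_ne hne with hlt | hgt
      · rw [if_pos (by rwa [abs_of_pos hxpos]), Real.sign_of_pos hxpos,
          Set.indicator_of_notMem (by simpa using hlt.not_gt)]
        ring
      · rw [if_neg (by rw [abs_of_pos hxpos]; exact not_lt.mpr hgt.le),
          Real.sign_of_pos hxpos, Set.indicator_of_mem (by exact hgt)]
        ring
    rw [integral_congr_ae hae]
    have hi1 : IntegrableOn (fun x => c / Real.sqrt 10 * (x * Real.exp (-b * x ^ 2)))
        (Set.Ioi (0:ℝ)) :=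
      ((integrable_mul_exp_neg_mul_sq hb).const_mul _).integrableOn
    have hi2 : IntegrableOn (fun x => 2 * c / Real.sqrt 10 *
        Set.indicator (Set.Ioi Δ) (fun y => y * Real.exp (-b * y ^ 2)) x)
        (Set.Ioi (0:ℝ)) :=
      (((integrable_mul_exp_neg_mul_sq hb).indicator measurableSet_Ioi).const_mul
        _).integrableOn
    rw [integral_add hi1 hi2, integral_const_mul, integral_const_mul,
      integral_indicator measurableSet_Ioi, Measure.restrict_restrict measurableSet_Ioi,
      Set.inter_eq_left.mpr (Set.Ioi_subset_Ioi hΔ.le)]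
  -- relation between c·vr and the sqrt expression
  have hcv : c * vr = Real.sqrt (vr / (2 * Real.pi)) := by
    have key : vr / (2 * Real.pi) = (Real.sqrt (2 * Real.pi * vr))⁻¹ ^ 2 * vr ^ 2 := by
      rw [inv_pow, hsq]
      field_simp
    rw [hc_def, key, ← mul_pow, Real.sqrt_sq (by positivity)]
  -- Part 1
  have key1 : (∫ w, g w * w ∂μ) =
      2 / Real.sqrt 10 * Real.sqrt (vr / (2 * Real.pi)) *
        (1 + 2 * Real.exp (-Δ ^ 2 / (2 * vr))) := by
    calc (∫ w, g w * w ∂μ) = ∫ x, c * Real.exp (-b * x ^ 2) * (g x * x) := by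
          rw [hμ, integral_gauss v hvne]
          congr 1
          funext x
          rw [hpdf x]
      _ = 2 * ∫ x in Set.Ioi (0:ℝ), c * Real.exp (-b * x ^ 2) * (g x * x) :=
          even_int heven hint
      _ = 2 * (c / Real.sqrt 10 * (Real.exp (-b * 0 ^ 2) / (2 * b)) +
            2 * c / Real.sqrt 10 * (Real.exp (-b * Δ ^ 2) / (2 * b))) := by
          rw [hsplit, intB hb 0, intB hb Δ]
      _ = 2 / Real.sqrt 10 * Real.sqrt (vr / (2 * Real.pi)) *
            (1 + 2 * Real.exp (-Δ ^ 2 / (2 * vr))) := by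
          rw [← hcv, show -b * (0:ℝ) ^ 2 = 0 by ring, Real.exp_zero, hexpΔ, hb_def]
          field_simp
  refine ⟨key1, fun hP => ?_⟩
  -- second moment
  have hw2 : ∫ w, w ^ 2 ∂μ = vr := by
    rw [hμ, integral_gauss v hvne]
    calc ∫ x, gaussianPDFReal 0 v x * x ^ 2
        = ∫ x, c * (x ^ 2 * Real.exp (-b * x ^ 2)) := by
          congr 1; funext x; rw [hpdf]; ring
      _ = c * (Real.sqrt (Real.pi / b) / (2 * b)) := by rw [integral_const_mul, intA hb]
      _ = vr := by
          have hπb : Real.pi / b = 2 * Real.pi * vr := by rw [hb_def]; field_simp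
          rw [hπb, hc_def, hb_def]
          rw [show (2 * (2 * vr)⁻¹ : ℝ) = vr⁻¹ by field_simp]
          field_simp
  -- E[g²] = 1/2
  have hS : MeasurableSet {w : ℝ | Δ ≤ |w|} := measurableSet_le measurable_const measurable_abs
  have hprob : IsProbabilityMeasure μ := by rw [hμ]; infer_instance
  have hg2 : ∫ w, g w ^ 2 ∂μ = 1 / 2 := by
    have h0 : ∀ᵐ w ∂μ, w ≠ 0 := by
      have hz : μ {(0:ℝ)} = 0 := by
        rw [hμ]
        exact gaussianReal_absolutelyContinuous 0 hvne (measure_singleton 0)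
      rw [MeasureTheory.ae_iff]
      have : {w : ℝ | ¬w ≠ 0} = {0} := by ext w; simp
      rw [this]
      exact hz
    have hae : (fun w => g w ^ 2) =ᵐ[μ] fun w =>
        1 / 10 + 8 / 10 * Set.indicator {w : ℝ | Δ ≤ |w|} (fun _ => (1:ℝ)) w := by
      filter_upwards [h0] with w hw
      have hsgn2 : Real.sign w ^ 2 = 1 := by
        rcases lt_or_gt_of_ne hw with h | h
        · rw [Real.sign_of_neg h]; norm_num
        · rw [Real.sign_of_pos h]; norm_num
      have h10 : Real.sqrt 10 ^ 2 = 10 := Real.sq_sqrt (by norm_num)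
      rw [hg]
      by_cases hlt : |w| < Δ
      · rw [if_pos hlt, Set.indicator_of_notMem (by simpa using hlt.not_ge)]
        rw [mul_pow, hsgn2, div_pow, one_pow, h10]
        norm_num
      · rw [if_neg hlt, Set.indicator_of_mem (by simpa using not_lt.mp hlt)]
        rw [mul_pow, hsgn2, div_pow, h10]
        norm_num
    rw [integral_congr_ae hae,
      integral_add (integrable_const _)
        (((integrable_const (1:ℝ)).indicator hS).const_mul _),
      integral_const, integral_const_mul, integral_indicator_const _ hS]
    rw [hμ] at hP ⊢
    simp [measureReal_def, hP]
    norm_num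
  -- final arithmetic
  rw [key1, hw2, hg2]
  have hsq10 : Real.sqrt 10 ^ 2 = 10 := Real.sq_sqrt (by norm_num)
  have hsqv : Real.sqrt (vr / (2 * Real.pi)) ^ 2 = vr / (2 * Real.pi) :=
    Real.sq_sqrt (by positivity)
  have hexpand : (2 / Real.sqrt 10 * Real.sqrt (vr / (2 * Real.pi)) *
      (1 + 2 * Real.exp (-Δ ^ 2 / (2 * vr)))) ^ 2
      = 4 / 10 * (vr / (2 * Real.pi)) * (1 + 2 * Real.exp (-Δ ^ 2 / (2 * vr))) ^ 2 := by
    rw [mul_pow, mul_pow, div_pow, hsq10, hsqv]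
    norm_num
  rw [hexpand]
  field_simp
  ring
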